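/- arXiv:1008.0809 — 3 statements merged into one kernel-verified Lean document; each statement's English description precedes it below -/
import Mathlib

section
/- The set of non-zero integers is Diophantine over ℤ via the following explicit definition: for every t ∈ ℤ, t ≠ 0 if and only if there exist x, u, v ∈ ℤ such that (2u − 1)(3v − 1) = t·x. -/
lemma nonzero_int_diophantine_aux :
    ∀ n : ℕ, ∀ t : ℤ, t.natAbs = n → t ≠ 0 →
      ∃ x u v : ℤ, (2 * u - 1) * (3 * v - 1) = t * x := by
  intro n
  induction n using Nat.strong_induction_on with
  | _ n ih =>
    intro t hn ht
    rcases Int.even_or_odd t with he | ho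
    · obtain ⟨s, hs⟩ := he
      have hs2 : t = 2 * s := by linarith
      have hs0 : s ≠ 0 := by
        rintro rfl; exact ht (by simp [hs2])
      have hlt : s.natAbs < n := by
        subst hn
        rw [hs2, Int.natAbs_mul]
        have h1 : 0 < s.natAbs := Int.natAbs_pos.mpr hs0
        have h2 : (2:ℤ).natAbs = 2 := rfl
        rw [h2]
        omega
      obtain ⟨x, u, v, h⟩ := ih s.natAbs hlt s rfl hs0
      refine ⟨2 * x, u, 4 * v - 1, ?_⟩
      have : (2 * u - 1) * (3 * (4 * v - 1) - 1) = 4 * ((2 * u - 1) * (3 * v - 1)) := by ring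
      rw [this, h, hs2]; ring
    · obtain ⟨u, hu⟩ := ho
      exact ⟨2, u + 1, 1, by rw [hu]; ring⟩

/-- The set of non-zero integers is Diophantine over `ℤ` via the explicit definition:
`t ≠ 0` iff `(2u - 1)(3v - 1) = t·x` for some integers `x, u, v`. -/
theorem nonzero_int_diophantine :
    ∀ t : ℤ, t ≠ 0 ↔ ∃ x u v : ℤ, (2 * u - 1) * (3 * v - 1) = t * x := by
  intro t
  constructor
  · exact nonzero_int_diophantine_aux t.natAbs t rfl
  · rintro ⟨x, u, v, h⟩ rfl
    rw [zero_mul, mul_eq_zero] at h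
    rcases h with h | h
    · omega
    · omega
end

section
/- If the set of integers ℤ, viewed as a subset of ℚ, is Diophantine over ℚ, then for every m and every subset A ⊆ ℤ^m which is Diophantine over ℤ, the set A viewed as a subset of ℚ^m is Diophantine over ℚ. -/
/-- A subset `A ⊆ R^ι` (for a finite index type `ι`) is *Diophantine* over a commutative
ring `R` if there are `k ∈ ℕ` and a polynomial `p` with coefficients in `R` such that a
tuple `t` lies in `A` iff `p(t, x) = 0` has a solution `x ∈ R^k`. -/
def IsDiophantine (R : Type*) [CommRing R] (ι : Type) [Fintype ι] (A : Set (ι → R)) : Prop :=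
  ∃ (k : ℕ) (p : MvPolynomial (ι ⊕ Fin k) R),
    ∀ t : ι → R, t ∈ A ↔ ∃ x : Fin k → R, MvPolynomial.eval (Sum.elim t x) p = 0

open MvPolynomial

lemma cast_eval {σ : Type*} (p : MvPolynomial σ ℤ) (v : σ → ℤ) :
    eval (fun i => ((v i : ℤ) : ℚ)) (map (Int.castRingHom ℚ) p) = ((eval v p : ℤ) : ℚ) := by
  have h := eval₂_comp_left (Int.castRingHom ℚ) (RingHom.id ℤ) v p
  rw [eval_map]
  simpa [Function.comp_def] using h.symm

lemma isDiophantine_of_fintype {R : Type*} [CommRing R] {ι : Type} [Fintype ι]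
    {A : Set (ι → R)} (σ : Type) [Fintype σ] (p : MvPolynomial (ι ⊕ σ) R)
    (h : ∀ t : ι → R, t ∈ A ↔ ∃ x : σ → R, eval (Sum.elim t x) p = 0) :
    IsDiophantine R ι A := by
  classical
  let e := Fintype.equivFin σ
  refine ⟨Fintype.card σ, rename (Sum.map id e) p, fun t => (h t).trans ?_⟩
  constructor
  · rintro ⟨x, hx⟩
    refine ⟨x ∘ e.symm, ?_⟩
    rw [eval_rename]
    have he : Sum.elim t (x ∘ e.symm) ∘ Sum.map id e = Sum.elim t x := by
      ext s; cases s <;> simp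
    rw [he]; exact hx
  · rintro ⟨x, hx⟩
    refine ⟨x ∘ e, ?_⟩
    rw [eval_rename] at hx
    have he : Sum.elim t x ∘ Sum.map id e = Sum.elim t (x ∘ e) := by
      ext s; cases s <;> simp
    rw [he] at hx; exact hx

/-- If `ℤ`, viewed as a subset of `ℚ`, is Diophantine over `ℚ`, then every subset of
`ℤ^m` which is Diophantine over `ℤ`, viewed as a subset of `ℚ^m`, is Diophantine
over `ℚ`. -/
theorem diophantine_over_Q_of_int_diophantine
    (hZ : IsDiophantine ℚ (Fin 1) {t | ∃ n : ℤ, t 0 = (n : ℚ)}) :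
    ∀ (m : ℕ) (A : Set (Fin m → ℤ)), IsDiophantine ℤ (Fin m) A →
      IsDiophantine ℚ (Fin m) {t | ∃ a : Fin m → ℤ, a ∈ A ∧ ∀ i, t i = (a i : ℚ)} := by
  classical
  obtain ⟨l, q, hq⟩ := hZ
  -- single-value version of hq
  have hq' : ∀ u : ℚ, (∃ n : ℤ, u = (n : ℚ)) ↔
      ∃ y : Fin l → ℚ, eval (Sum.elim (fun _ : Fin 1 => u) y) q = 0 := by
    intro u
    simpa using hq (fun _ => u)
  rintro m A ⟨k, p, hp⟩
  set σ : Type := Fin k ⊕ ((Fin m × Fin l) ⊕ (Fin k × Fin l)) with hσ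
  -- the renaming maps
  let f : Fin m ⊕ Fin k → Fin m ⊕ σ := Sum.map id Sum.inl
  let g : Fin m → (Fin 1 ⊕ Fin l) → Fin m ⊕ σ := fun i =>
    Sum.elim (fun _ => Sum.inl i) (fun a => Sum.inr (Sum.inr (Sum.inl (i, a))))
  let h : Fin k → (Fin 1 ⊕ Fin l) → Fin m ⊕ σ := fun j =>
    Sum.elim (fun _ => Sum.inr (Sum.inl j)) (fun a => Sum.inr (Sum.inr (Sum.inr (j, a))))
  let P : MvPolynomial (Fin m ⊕ σ) ℚ :=
    (rename f (map (Int.castRingHom ℚ) p)) ^ 2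
      + ∑ i : Fin m, (rename (g i) q) ^ 2
      + ∑ j : Fin k, (rename (h j) q) ^ 2
  refine isDiophantine_of_fintype σ P ?_
  intro t
  constructor
  · rintro ⟨a, haA, hta⟩
    obtain ⟨x, hx⟩ := (hp a).1 haA
    -- integrality witnesses
    have hyi : ∀ i : Fin m, ∃ y : Fin l → ℚ,
        eval (Sum.elim (fun _ : Fin 1 => t i) y) q = 0 := fun i =>
      (hq' (t i)).1 ⟨a i, hta i⟩
    have hzj : ∀ j : Fin k, ∃ y : Fin l → ℚ,
        eval (Sum.elim (fun _ : Fin 1 => ((x j : ℤ) : ℚ)) y) q = 0 := fun j =>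
      (hq' _).1 ⟨x j, rfl⟩
    choose Y hY using hyi
    choose Z hZ' using hzj
    refine ⟨Sum.elim (fun j => ((x j : ℤ) : ℚ))
      (Sum.elim (fun pa => Y pa.1 pa.2) (fun pa => Z pa.1 pa.2)), ?_⟩
    set w : σ → ℚ := Sum.elim (fun j => ((x j : ℤ) : ℚ))
      (Sum.elim (fun pa => Y pa.1 pa.2) (fun pa => Z pa.1 pa.2))
    show eval (Sum.elim t w) P = 0
    have e1 : eval (Sum.elim t w) (rename f (map (Int.castRingHom ℚ) p)) = 0 := by
      rw [eval_rename]
      have : (Sum.elim t w ∘ f) = fun s => ((Sum.elim a x s : ℤ) : ℚ) := by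
        ext s; cases s with
        | inl i => exact hta i
        | inr j => rfl
      rw [this, cast_eval, hx, Int.cast_zero]
    have e2 : ∀ i : Fin m, eval (Sum.elim t w) (rename (g i) q) = 0 := by
      intro i
      rw [eval_rename]
      have : (Sum.elim t w ∘ g i) = Sum.elim (fun _ : Fin 1 => t i) (Y i) := by
        ext s; cases s <;> rfl
      rw [this]; exact hY i
    have e3 : ∀ j : Fin k, eval (Sum.elim t w) (rename (h j) q) = 0 := by
      intro j
      rw [eval_rename]
      have : (Sum.elim t w ∘ h j) = Sum.elim (fun _ : Fin 1 => ((x j : ℤ) : ℚ)) (Z j) := by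
        ext s; cases s <;> rfl
      rw [this]; exact hZ' j
    simp only [P, map_add, map_pow, map_sum, e1]
    rw [Finset.sum_eq_zero (fun i _ => by rw [e2 i]; ring),
      Finset.sum_eq_zero (fun j _ => by rw [e3 j]; ring)]
    ring
  · rintro ⟨w, hw⟩
    have hw' : eval (Sum.elim t w) ((rename f (map (Int.castRingHom ℚ) p)) ^ 2)
        + (eval (Sum.elim t w) (∑ i : Fin m, (rename (g i) q) ^ 2)
        + eval (Sum.elim t w) (∑ j : Fin k, (rename (h j) q) ^ 2)) = 0 := by
      rw [← map_add, ← map_add, ← add_assoc]; exact hw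
    -- each part is nonneg
    have n1 : (0:ℚ) ≤ eval (Sum.elim t w) ((rename f (map (Int.castRingHom ℚ) p)) ^ 2) := by
      rw [map_pow]; positivity
    have n2 : (0:ℚ) ≤ eval (Sum.elim t w) (∑ i : Fin m, (rename (g i) q) ^ 2) := by
      rw [map_sum]
      exact Finset.sum_nonneg fun i _ => by rw [map_pow]; positivity
    have n3 : (0:ℚ) ≤ eval (Sum.elim t w) (∑ j : Fin k, (rename (h j) q) ^ 2) := by
      rw [map_sum]
      exact Finset.sum_nonneg fun j _ => by rw [map_pow]; positivity
    have z1 : eval (Sum.elim t w) (rename f (map (Int.castRingHom ℚ) p)) = 0 := by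
      have := ((add_eq_zero_iff_of_nonneg n1 (by linarith)).1 hw').1
      rw [map_pow] at this
      exact pow_eq_zero_iff (n := 2) (by norm_num) |>.1 this
    have hrest := ((add_eq_zero_iff_of_nonneg n1 (by linarith)).1 hw').2
    have z2 : ∀ i : Fin m, eval (Sum.elim t w) (rename (g i) q) = 0 := by
      have h2 := ((add_eq_zero_iff_of_nonneg n2 n3).1 hrest).1
      rw [map_sum] at h2
      intro i
      have := (Finset.sum_eq_zero_iff_of_nonneg (fun i _ => by rw [map_pow]; positivity)).1 h2
        i (Finset.mem_univ i)
      rw [map_pow] at this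
      exact pow_eq_zero_iff (n := 2) (by norm_num) |>.1 this
    have z3 : ∀ j : Fin k, eval (Sum.elim t w) (rename (h j) q) = 0 := by
      have h3 := ((add_eq_zero_iff_of_nonneg n2 n3).1 hrest).2
      rw [map_sum] at h3
      intro j
      have := (Finset.sum_eq_zero_iff_of_nonneg (fun j _ => by rw [map_pow]; positivity)).1 h3
        j (Finset.mem_univ j)
      rw [map_pow] at this
      exact pow_eq_zero_iff (n := 2) (by norm_num) |>.1 this
    -- extract integers
    have ha : ∀ i : Fin m, ∃ n : ℤ, t i = (n : ℚ) := by
      intro i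
      refine (hq' (t i)).2 ⟨fun b => w (Sum.inr (Sum.inl (i, b))), ?_⟩
      have hz := z2 i
      rw [eval_rename] at hz
      have he : (Sum.elim t w ∘ g i)
          = Sum.elim (fun _ : Fin 1 => t i) (fun b => w (Sum.inr (Sum.inl (i, b)))) := by
        ext s; cases s <;> rfl
      rw [he] at hz; exact hz
    have hx : ∀ j : Fin k, ∃ n : ℤ, w (Sum.inl j) = (n : ℚ) := by
      intro j
      refine (hq' _).2 ⟨fun b => w (Sum.inr (Sum.inr ((j, b) : Fin k × Fin l))), ?_⟩
      have hz := z3 j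
      rw [eval_rename] at hz
      have he : (Sum.elim t w ∘ h j)
          = Sum.elim (fun _ : Fin 1 => w (Sum.inl j))
              (fun b => w (Sum.inr (Sum.inr ((j, b) : Fin k × Fin l)))) := by
        ext s; cases s <;> rfl
      rw [he] at hz; exact hz
    choose a hta using ha
    choose x htx using hx
    refine ⟨a, ?_, hta⟩
    refine (hp a).2 ⟨x, ?_⟩
    rw [eval_rename] at z1
    have : (Sum.elim t w ∘ f) = fun s => ((Sum.elim a x s : ℤ) : ℚ) := by
      ext s; cases s with
      | inl i => exact hta i
      | inr j => exact htx j
    rw [this, cast_eval] at z1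
    exact_mod_cast z1
end

section
/- Assume Mazur's conjecture in the following form: for every n and every finite family of polynomials p₁,…,p_r ∈ ℚ[x₁,…,x_n], the topological closure in ℝⁿ of the set {x ∈ ℚⁿ : p₁(x) = ⋯ = p_r(x) = 0} of rational common zeros has only finitely many connected components. Then the set of integers ℤ, viewed as a subset of ℚ, is not Diophantine over ℚ. -/
/-- Mazur's conjecture (affine form): for every finite family of polynomials over `ℚ`
in `n` variables, the topological closure in `ℝⁿ` of the set of their common rational
zeros has only finitely many connected components. -/
def MazurConjecture : Prop :=
  ∀ (n r : ℕ) (p : Fin r → MvPolynomial (Fin n) ℚ),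
    Finite (ConnectedComponents
      (closure {x : Fin n → ℝ | ∃ q : Fin n → ℚ,
        (∀ i, x i = (q i : ℝ)) ∧ ∀ j, MvPolynomial.eval q (p j) = 0} : Set (Fin n → ℝ)))

/-- A preconnected subset of `ℝ` consisting of integers is a subsingleton. -/
lemma preconnected_int_subsingleton {s : Set ℝ} (hs : IsPreconnected s)
    (h : s ⊆ Set.range ((↑) : ℤ → ℝ)) : s.Subsingleton := by
  intro a ha b hb
  by_contra hab
  obtain ⟨m, rfl⟩ := h ha
  obtain ⟨n, rfl⟩ := h hb
  have key : ∀ m n : ℤ, m < n → ((m : ℝ)) ∈ s → ((n : ℝ)) ∈ s → False := by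
    intro m n hmn hm hn
    have h1 : (m : ℝ) + 1 ≤ n := by exact_mod_cast hmn
    have hmem : ((m : ℝ) + 1/2) ∈ Set.Icc (m : ℝ) (n : ℝ) := ⟨by linarith, by linarith⟩
    -- note: h1 gives the upper bound
    obtain ⟨j, hj⟩ := h (hs.Icc_subset hm hn hmem)
    have h2 : (2 * j : ℤ) = 2 * m + 1 := by
      have : (2 * j : ℝ) = 2 * m + 1 := by linarith
      exact_mod_cast this
    omega
  rcases lt_trichotomy m n with hmn | hmn | hmn
  · exact key m n hmn ha hb
  · exact hab (by rw [hmn])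
  · exact key n m hmn hb ha

/-- If Mazur's conjecture holds, then `ℤ`, viewed as a subset of `ℚ`, is not
Diophantine over `ℚ`. -/
theorem int_not_diophantine_over_Q_of_mazur (hM : MazurConjecture) :
    ¬ IsDiophantine ℚ (Fin 1) {t | ∃ n : ℤ, t 0 = (n : ℚ)} := by
  rintro ⟨k, p, hp⟩
  set e : Fin 1 ⊕ Fin k ≃ Fin (1 + k) := finSumFinEquiv
  set p' : MvPolynomial (Fin (1 + k)) ℚ := MvPolynomial.rename e p with hp'
  set S : Set (Fin (1 + k) → ℝ) := {x | ∃ q : Fin (1 + k) → ℚ,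
      (∀ i, x i = (q i : ℝ)) ∧
        ∀ j : Fin 1, MvPolynomial.eval q ((fun _ : Fin 1 => p') j) = 0} with hS
  have hF : Finite (ConnectedComponents (closure S : Set (Fin (1 + k) → ℝ))) :=
    hM (1 + k) 1 (fun _ => p')
  set i0 : Fin (1 + k) := e (Sum.inl 0) with hi0
  -- every point of the closure has integer `i0`-coordinate
  have hsub : closure S ⊆ {y : Fin (1 + k) → ℝ | y i0 ∈ Set.range ((↑) : ℤ → ℝ)} := by
    apply closure_minimal
    · rintro x ⟨q, hxq, hq⟩
      have h0 := hq 0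
      have heval : MvPolynomial.eval (q ∘ e) p = 0 := by
        rwa [hp', MvPolynomial.eval_rename] at h0
      have hmem : (fun i : Fin 1 => q (e (Sum.inl i))) ∈
          {t : Fin 1 → ℚ | ∃ n : ℤ, t 0 = (n : ℚ)} := by
        rw [hp]
        refine ⟨fun j => q (e (Sum.inr j)), ?_⟩
        have hfe : (Sum.elim (fun i : Fin 1 => q (e (Sum.inl i)))
            (fun j : Fin k => q (e (Sum.inr j)))) = q ∘ e := by
          funext i; cases i <;> rfl
        rw [hfe]; exact heval
      obtain ⟨m, hm⟩ := hmem
      refine ⟨m, ?_⟩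
      rw [hxq i0]
      exact_mod_cast congrArg (fun r : ℚ => (r : ℝ)) hm.symm
    · exact (Int.isClosedEmbedding_coe_real.isClosed_range).preimage (continuous_apply i0)
  -- for each integer, produce a point of the closure with that `i0`-coordinate
  have key : ∀ m : ℤ, ∃ y : closure S, (y : Fin (1 + k) → ℝ) i0 = (m : ℝ) := by
    intro m
    obtain ⟨x, hx⟩ := (hp (fun _ => (m : ℚ))).mp ⟨m, rfl⟩
    set q : Fin (1 + k) → ℚ := fun i => Sum.elim (fun _ : Fin 1 => (m : ℚ)) x (e.symm i) with hq
    have hqS : (fun i => ((q i : ℚ) : ℝ)) ∈ S := by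
      refine ⟨q, fun i => rfl, fun j => ?_⟩
      show MvPolynomial.eval q p' = 0
      rw [hp', MvPolynomial.eval_rename]
      have hfe : q ∘ ⇑e = Sum.elim (fun _ : Fin 1 => (m : ℚ)) x := by
        funext i; cases i <;> simp [hq]
      rw [hfe]; exact hx
    refine ⟨⟨fun i => ((q i : ℚ) : ℝ), subset_closure hqS⟩, ?_⟩
    show ((q i0 : ℚ) : ℝ) = (m : ℝ)
    simp [hq, hi0]
  -- the map sending an integer to the connected component of its point is injective
  have hinj : Function.Injective
      (fun m : ℤ => (ConnectedComponents.mk (key m).choose :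
        ConnectedComponents (closure S : Set (Fin (1 + k) → ℝ)))) := by
    intro m₁ m₂ hmm
    have hcc : (key m₁).choose ∈ connectedComponent ((key m₂).choose) :=
      ConnectedComponents.coe_eq_coe'.mp hmm
    set g : {y : Fin (1 + k) → ℝ // y ∈ closure S} → ℝ := fun y => (y : Fin (1 + k) → ℝ) i0 with hg'
    have hg : Continuous g := (continuous_apply i0).comp continuous_subtype_val
    have hpre : IsPreconnected (g '' connectedComponent ((key m₂).choose)) :=
      isPreconnected_connectedComponent.image g hg.continuousOn
    have hrange : g '' connectedComponent ((key m₂).choose) ⊆ Set.range ((↑) : ℤ → ℝ) := by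
      rintro - ⟨y, -, rfl⟩
      exact hsub y.2
    have hsing := preconnected_int_subsingleton hpre hrange
    have h1 : (m₁ : ℝ) ∈ g '' connectedComponent ((key m₂).choose) :=
      ⟨(key m₁).choose, hcc, (key m₁).choose_spec⟩
    have h2 : (m₂ : ℝ) ∈ g '' connectedComponent ((key m₂).choose) :=
      ⟨(key m₂).choose, mem_connectedComponent, (key m₂).choose_spec⟩
    exact_mod_cast hsing h1 h2
  exact @not_finite ℤ _ (Finite.of_injective _ hinj)
end
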